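/- Let x0 ≥ 1 and f : [x0, ∞) → ℝ be twice continuously differentiable with f, f', f'' > 0, satisfying f''(x)/2 ≤ f''(y) ≤ f''(x) whenever x0 ≤ x ≤ y ≤ 2x. Then there exists a constant C > 0 such that f''(y) ≥ C/y for all y ≥ x0; consequently f'(y) → ∞ and f(y) → ∞ as y → ∞. -/

import Mathlib

theorem stmt_4 (x0 : ℝ) (f f' f'' : ℝ → ℝ)
    (hx0 : 1 ≤ x0)
    (hd1 : ∀ x ∈ Set.Ici x0, HasDerivAt f (f' x) x)
    (hd2 : ∀ x ∈ Set.Ici x0, HasDerivAt f' (f'' x) x)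
    (hcont : ContinuousOn f'' (Set.Ici x0))
    (hpos : ∀ x ∈ Set.Ici x0, 0 < f x ∧ 0 < f' x ∧ 0 < f'' x)
    (hdbl : ∀ x y : ℝ, x0 ≤ x → x ≤ y → y ≤ 2 * x → f'' x / 2 ≤ f'' y ∧ f'' y ≤ f'' x) :
    (∃ C : ℝ, 0 < C ∧ ∀ y : ℝ, x0 ≤ y → C / y ≤ f'' y) ∧
      Filter.Tendsto f' Filter.atTop Filter.atTop ∧
      Filter.Tendsto f Filter.atTop Filter.atTop := by
  have hx0pos : (0:ℝ) < x0 := lt_of_lt_of_le one_pos hx0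
  have hf''x0 : 0 < f'' x0 := (hpos x0 Set.self_mem_Ici).2.2
  -- Key dyadic lower bound
  have key : ∀ k : ℕ, ∀ y, x0 ≤ y → y ≤ 2 ^ k * x0 → f'' x0 / 2 ^ k ≤ f'' y := by
    intro k
    induction k with
    | zero =>
      intro y hy hy2
      simp only [pow_zero, one_mul] at hy2
      have : y = x0 := le_antisymm hy2 hy
      simp [this]
    | succ m ih =>
      intro y hy hy2
      have h2m : (0:ℝ) < 2 ^ m := by positivity
      by_cases h : y ≤ 2 ^ m * x0
      · have := ih y hy h
        calc f'' x0 / 2 ^ (m+1) ≤ f'' x0 / 2 ^ m := by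
              apply div_le_div_of_nonneg_left hf''x0.le h2m
              exact pow_le_pow_right₀ one_le_two (Nat.le_succ m)
          _ ≤ f'' y := this
      · push_neg at h
        have h1m : (1:ℝ) ≤ 2 ^ m := by exact_mod_cast Nat.one_le_two_pow (n := m)
        have hxm : x0 ≤ 2 ^ m * x0 := by nlinarith
        have hstep := (hdbl (2 ^ m * x0) y hxm h.le (by
          rw [pow_succ] at hy2; linarith)).1
        have hbase : f'' x0 / 2 ^ m ≤ f'' (2 ^ m * x0) := ih _ hxm le_rfl
        calc f'' x0 / 2 ^ (m+1) = (f'' x0 / 2 ^ m) / 2 := by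
              rw [pow_succ]; ring
          _ ≤ f'' (2 ^ m * x0) / 2 := by linarith
          _ ≤ f'' y := hstep
  -- The constant
  set C : ℝ := f'' x0 * x0 / 2 with hC
  have hCpos : 0 < C := by positivity
  have hlow : ∀ y : ℝ, x0 ≤ y → C / y ≤ f'' y := by
    intro y hy
    have hypos : 0 < y := lt_of_lt_of_le hx0pos hy
    have hex : ∃ n : ℕ, y ≤ 2 ^ n * x0 := by
      obtain ⟨n, hn⟩ := pow_unbounded_of_one_lt y one_lt_two
      exact ⟨n, hn.le.trans (le_mul_of_one_le_right (by positivity) hx0)⟩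
    classical
    set k := Nat.find hex with hk
    have hk1 : y ≤ 2 ^ k * x0 := Nat.find_spec hex
    cases hkk : k with
    | zero =>
      have : y = x0 := by
        rw [hkk] at hk1; simp at hk1; exact le_antisymm hk1 hy
      subst this
      rw [hC, div_le_iff₀ hypos]
      nlinarith [hf''x0]
    | succ m =>
      have hm : ¬ (y ≤ 2 ^ m * x0) := Nat.find_min hex (by omega)
      push_neg at hm
      have h1 : f'' x0 / 2 ^ (m+1) ≤ f'' y := key (m+1) y hy (hkk ▸ hk1)
      have h2 : C / y ≤ f'' x0 / 2 ^ (m+1) := by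
        rw [hC, div_le_div_iff₀ hypos (by positivity), pow_succ]
        have h2m : (0:ℝ) < 2 ^ m := by positivity
        nlinarith [hm, hf''x0, h2m]
      linarith
  refine ⟨⟨C, hCpos, hlow⟩, ?_, ?_⟩
  · -- f' tends to infinity
    have hint : interior (Set.Ici x0) = Set.Ioi x0 := interior_Ici
    have hmono : MonotoneOn (fun y => f' y - C * Real.log y) (Set.Ici x0) := by
      apply monotoneOn_of_hasDerivWithinAt_nonneg (convex_Ici x0)
        (f' := fun y => f'' y - C * y⁻¹)
      · intro x hx
        have hxpos : 0 < x := lt_of_lt_of_le hx0pos hx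
        exact ((hd2 x hx).continuousAt.sub
          (continuousAt_const.mul (Real.continuousAt_log hxpos.ne'))).continuousWithinAt
      · intro x hx
        rw [hint] at hx
        have hxpos : 0 < x := lt_of_lt_of_le hx0pos (le_of_lt hx)
        exact ((hd2 x (Set.mem_Ici.2 (le_of_lt hx))).sub
          ((Real.hasDerivAt_log hxpos.ne').const_mul C)).hasDerivWithinAt
      · intro x hx
        rw [hint] at hx
        have hxpos : 0 < x := lt_of_lt_of_le hx0pos (le_of_lt hx)
        have := hlow x (le_of_lt hx)
        rw [div_eq_mul_inv] at this
        linarith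
    have hlb : ∀ y, x0 ≤ y → (f' x0 - C * Real.log x0) + C * Real.log y ≤ f' y := by
      intro y hy
      have := hmono Set.self_mem_Ici (Set.mem_Ici.2 hy) hy
      simp only at this
      linarith
    have htl : Filter.Tendsto (fun y => (f' x0 - C * Real.log x0) + C * Real.log y)
        Filter.atTop Filter.atTop :=
      Filter.tendsto_atTop_add_const_left _ _
        (Filter.Tendsto.const_mul_atTop hCpos Real.tendsto_log_atTop)
    exact Filter.tendsto_atTop_mono'
      Filter.atTop
      (by filter_upwards [Filter.eventually_ge_atTop x0] with y hy using hlb y hy) htl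
  · -- f tends to infinity
    have hint : interior (Set.Ici x0) = Set.Ioi x0 := interior_Ici
    have hf'mono : MonotoneOn f' (Set.Ici x0) := by
      apply monotoneOn_of_hasDerivWithinAt_nonneg (convex_Ici x0) (f' := f'')
      · exact fun x hx => (hd2 x hx).continuousAt.continuousWithinAt
      · intro x hx
        rw [hint] at hx
        exact (hd2 x (Set.mem_Ici.2 (le_of_lt hx))).hasDerivWithinAt
      · intro x hx
        rw [hint] at hx
        exact (hpos x (Set.mem_Ici.2 (le_of_lt hx))).2.2.le
    have hf'x0 : 0 < f' x0 := (hpos x0 Set.self_mem_Ici).2.1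
    have hmono : MonotoneOn (fun y => f y - f' x0 * y) (Set.Ici x0) := by
      apply monotoneOn_of_hasDerivWithinAt_nonneg (convex_Ici x0)
        (f' := fun y => f' y - f' x0)
      · exact fun x hx => ((hd1 x hx).continuousAt.sub
          (continuousAt_const.mul continuousAt_id)).continuousWithinAt
      · intro x hx
        rw [hint] at hx
        have h := (hd1 x (Set.mem_Ici.2 (le_of_lt hx))).sub ((hasDerivAt_id x).const_mul (f' x0))
        have h2 := h.hasDerivWithinAt (s := interior (Set.Ici x0))
        rw [mul_one] at h2
        exact h2
      · intro x hx
        rw [hint] at hx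
        have := hf'mono Set.self_mem_Ici (Set.mem_Ici.2 (le_of_lt hx)) (le_of_lt hx)
        linarith
    have hlb : ∀ y, x0 ≤ y → (f x0 - f' x0 * x0) + f' x0 * y ≤ f y := by
      intro y hy
      have := hmono Set.self_mem_Ici (Set.mem_Ici.2 hy) hy
      simp only at this
      linarith
    have htl : Filter.Tendsto (fun y => (f x0 - f' x0 * x0) + f' x0 * y)
        Filter.atTop Filter.atTop :=
      Filter.tendsto_atTop_add_const_left _ _
        (Filter.Tendsto.const_mul_atTop hf'x0 Filter.tendsto_id)
    exact Filter.tendsto_atTop_mono'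
      Filter.atTop
      (by filter_upwards [Filter.eventually_ge_atTop x0] with y hy using hlb y hy) htl
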